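/- Let μ and ν be Borel probability measures on ℝ and let 0 < a < b. Then | ∫_{(a,b]} log x dμ(x) − ∫_{(a,b]} log x dν(x) | ≤ 2(|log a| + |log b|) · ‖μ − ν‖_{[0,∞)}. -/

import Mathlib

open MeasureTheory ProbabilityTheory Matrix Filter
open scoped BigOperators ENNReal NNReal Topology

noncomputable section

namespace BandPaper

/-- The singular values of a square complex matrix: the square roots of the
eigenvalues of `Aᴴ * A` (counted with multiplicity). -/
def singularValues {N : ℕ} (A : Matrix (Fin N) (Fin N) ℂ) : Fin N → ℝ :=
  fun i => Real.sqrt ((Matrix.isHermitian_conjTranspose_mul_self A).eigenvalues i)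

/-- The least singular value of a square complex matrix. -/
def sigmaMin {N : ℕ} (A : Matrix (Fin N) (Fin N) ℂ) : ℝ :=
  ⨅ i, singularValues A i

/-- The operator (spectral) norm of a square complex matrix: its largest singular value. -/
def opNorm {N : ℕ} (A : Matrix (Fin N) (Fin N) ℂ) : ℝ :=
  ⨆ i, singularValues A i

/-- The `L∞ → L∞` operator norm of a matrix: its maximum absolute row sum. -/
def linftyNorm {n : Type} [Fintype n] (M : Matrix n n ℂ) : ℝ :=
  ⨆ i, ∑ k, ‖M i k‖

/-- The empirical spectral distribution of a square complex matrix: the uniform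
counting measure on the roots of its characteristic polynomial. -/
def ESD {N : ℕ} (A : Matrix (Fin N) (Fin N) ℂ) : Measure ℂ :=
  (N : ℝ≥0∞)⁻¹ • ((A.charpoly.roots).map Measure.dirac).sum

/-- The empirical distribution of the singular values of a square complex matrix. -/
def ESVD {N : ℕ} (A : Matrix (Fin N) (Fin N) ℂ) : Measure ℝ :=
  (N : ℝ≥0∞)⁻¹ • (∑ i, Measure.dirac (singularValues A i))

/-- The circular law: the uniform probability measure on the closed unit disk of `ℂ`. -/
def circularLaw : Measure ℂ :=
  (ENNReal.ofReal Real.pi)⁻¹ • (volume.restrict (Metric.closedBall (0 : ℂ) 1))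

/-- Kolmogorov distance on `[0, ∞)` between two measures on `ℝ`. -/
def kolDist (μ ν : Measure ℝ) : ℝ :=
  ⨆ x : {x : ℝ // 0 ≤ x}, |(μ (Set.Icc 0 x)).toReal - (ν (Set.Icc 0 x)).toReal|

/-- The random matrix `X = (b_{ij} x_{ij})` built from a deterministic variance
profile `b` and random entries `x`. -/
def bandMatrix {Ω : Type} {N : ℕ} (b : Fin N → Fin N → ℝ) (x : Fin N → Fin N → Ω → ℂ)
    (ω : Ω) : Matrix (Fin N) (Fin N) ℂ :=
  Matrix.of fun i j => (b i j : ℂ) * x i j ω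

/-- Conditions (1) (double stochasticity) and (2) (bandwidth) of Definition 1.1
on the variance profile `b`. -/
def VarProfile (N W : ℕ) (CW : ℝ) (b : Fin N → Fin N → ℝ) : Prop :=
  (∀ i, ∑ j, b i j ^ 2 = 1) ∧ (∀ j, ∑ i, b i j ^ 2 = 1) ∧ ∀ i j, b i j ^ 2 ≤ CW / W

/-- The variance profile matrix `S = (b_{ij}²)`, viewed as a complex matrix. -/
def profileMatrix {N : ℕ} (b : Fin N → Fin N → ℝ) : Matrix (Fin N) (Fin N) ℂ :=
  Matrix.of fun i j => ((b i j ^ 2 : ℝ) : ℂ)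

/-- The `2N × 2N` matrix `I - [[y₂ S, y₁ Sᵀ], [y₁ S, y₂ Sᵀ]]` of Definition 1.1 (3). -/
def blockMat {N : ℕ} (S : Matrix (Fin N) (Fin N) ℂ) (y₁ y₂ : ℂ) :
    Matrix (Fin N ⊕ Fin N) (Fin N ⊕ Fin N) ℂ :=
  1 - Matrix.fromBlocks (y₂ • S) (y₁ • Sᵀ) (y₁ • S) (y₂ • Sᵀ)

/-- Condition (3) (bounded inverse) of Definition 1.1, for a family of variance
profiles indexed by the dimension `N`, with constants independent of `N` and `W`. -/
def BoundedInverse (b : ∀ N : ℕ, Fin N → Fin N → ℝ) : Prop :=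
  ∀ z : ℂ, 0 < ‖z‖ → ‖z‖ < 1 →
    ∃ C cz : ℝ, 0 < C ∧ 0 < cz ∧ ∀ N : ℕ, ∀ y₁ y₂ : ℂ,
      ‖y₁ + 1 - ((‖z‖ ^ 2 : ℝ) : ℂ)‖ ≤ cz →
      ‖y₂ + ((‖z‖ ^ 2 : ℝ) : ℂ)‖ ≤ cz →
      IsUnit (blockMat (profileMatrix (b N)) y₁ y₂) ∧
      linftyNorm (blockMat (profileMatrix (b N)) y₁ y₂)⁻¹ ≤ C * Real.log N ^ C

/-- The entries `x i j` are (jointly) independent. -/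
def IndepEntries {Ω : Type} [MeasureSpace Ω] {N : ℕ} (x : Fin N → Fin N → Ω → ℂ) : Prop :=
  iIndepFun (fun p : Fin N × Fin N => x p.1 p.2) ℙ

/-- A complex random variable is measurable with mean `0` and variance `1`. -/
def MeanZeroVarOne {Ω : Type} [MeasureSpace Ω] (x : Ω → ℂ) : Prop :=
  Measurable x ∧ (∫ ω, x ω) = 0 ∧ (∫⁻ ω, ENNReal.ofReal (‖x ω‖ ^ 2)) = 1

/-- Uniformly bounded moments of all orders, with constants independent of `N`. -/
def UniformMoments (Ω : ℕ → Type) [∀ N, MeasureSpace (Ω N)]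
    (x : ∀ N, Fin N → Fin N → Ω N → ℂ) : Prop :=
  ∀ p : ℕ, ∃ μp : ℝ, ∀ N, ∀ i j,
    (∫⁻ ω, ENNReal.ofReal (‖x N i j ω‖ ^ p)) ≤ ENNReal.ofReal (μp ^ p)

/-- Uniformly subgaussian entries: `‖x_{ij}‖_{ψ₂} ≤ C`, i.e. `E exp(|x_{ij}|²/C²) ≤ 2`. -/
def SubgaussianFamily (Ω : ℕ → Type) [∀ N, MeasureSpace (Ω N)]
    (x : ∀ N, Fin N → Fin N → Ω N → ℂ) : Prop :=
  ∃ C : ℝ, 0 < C ∧ ∀ N, ∀ i j,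
    (∫⁻ ω, ENNReal.ofReal (Real.exp (‖x N i j ω‖ ^ 2 / C ^ 2))) ≤ 2

/-- A real-valued entry with density on `ℝ` bounded by `Cd`. -/
def RealEntryBoundedDensity {Ω : Type} [MeasureSpace Ω] (x : Ω → ℂ) (Cd : ℝ) : Prop :=
  (∀ ω, (x ω).im = 0) ∧ Measure.map (fun ω => (x ω).re) ℙ ≤ ENNReal.ofReal Cd • volume

/-- A complex-valued entry with independent real and imaginary parts, each with
density on `ℝ` bounded by `Cd`. -/
def ComplexEntryBoundedDensity {Ω : Type} [MeasureSpace Ω] (x : Ω → ℂ) (Cd : ℝ) : Prop :=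
  IndepFun (fun ω => (x ω).re) (fun ω => (x ω).im) ℙ ∧
  Measure.map (fun ω => (x ω).re) ℙ ≤ ENNReal.ofReal Cd • volume ∧
  Measure.map (fun ω => (x ω).im) ℙ ≤ ENNReal.ofReal Cd • volume

/-- The bounded density assumption of Theorem 1.6 for a family of entries. -/
def BoundedDensityFamily (Ω : ℕ → Type) [∀ N, MeasureSpace (Ω N)]
    (x : ∀ N, Fin N → Fin N → Ω N → ℂ) (Cd : ℝ) : Prop :=
  (∀ N, ∀ i j, RealEntryBoundedDensity (x N i j) Cd) ∨
  (∀ N, ∀ i j, ComplexEntryBoundedDensity (x N i j) Cd)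

/-- Graph distance on `ℤ/NZ` between (representatives of) two residues. -/
def cycDist (N a b : ℕ) : ℕ :=
  min (max a b - min a b) (N - (max a b - min a b))

/-- The block band variance profile of Example 1.2 (with `N = W·L`):
`b_{ij} = (3W)^{-1/2}·1(|⌈i/W⌉ − ⌈j/W⌉|_L ∈ {0,1})`, written with `0`-based indices. -/
def blockBandProfile (N W L : ℕ) : Fin N → Fin N → ℝ :=
  fun i j => if cycDist L (i.val / W) (j.val / W) ≤ 1 then 1 / Real.sqrt (3 * W) else 0

/-- The self-consistent (cubic) equation `1/m = -w(1+m) + |z|²/(1+m)` at `w = iη`,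
together with `Im m > 0`; its unique such solution is `m_c(iη, z)`. -/
def SelfConsistent (z : ℂ) (η : ℝ) (m : ℂ) : Prop :=
  0 < m.im ∧ m⁻¹ = -(Complex.I * η) * (1 + m) + ((‖z‖ ^ 2 : ℝ) : ℂ) / (1 + m)

/-- The resolvent `G(w) = ((X - zI)ᴴ(X - zI) - w)⁻¹`. -/
def resG {N : ℕ} (X : Matrix (Fin N) (Fin N) ℂ) (z w : ℂ) : Matrix (Fin N) (Fin N) ℂ :=
  ((X - z • 1)ᴴ * (X - z • 1) - w • 1)⁻¹

/-- The resolvent `𝒢(w) = ((X - zI)(X - zI)ᴴ - w)⁻¹`. -/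
def resGc {N : ℕ} (X : Matrix (Fin N) (Fin N) ℂ) (z w : ℂ) : Matrix (Fin N) (Fin N) ℂ :=
  ((X - z • 1) * (X - z • 1)ᴴ - w • 1)⁻¹

/-- The control parameter `Λ`: the maximum of the diagonal error
`max_i |G_{ii} - m| + max_i |𝒢_{ii} - m|` and the off-diagonal error
`max_{i≠j} |G_{ij}| + max_{i≠j} |𝒢_{ij}|`. -/
def Lambda {N : ℕ} (G Gc : Matrix (Fin N) (Fin N) ℂ) (m : ℂ) : ℝ :=
  max ((⨆ i, ‖G i i - m‖) + (⨆ i, ‖Gc i i - m‖))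
      ((⨆ p : {p : Fin N × Fin N // p.1 ≠ p.2}, ‖G p.val.1 p.val.2‖) +
       (⨆ p : {p : Fin N × Fin N // p.1 ≠ p.2}, ‖Gc p.val.1 p.val.2‖))

/-- The Euclidean norm of the restriction of `v : ℂ^N` to the `k`-th (0-based)
block of consecutive coordinates of length `W₀`. -/
def blockNorm {N : ℕ} (W₀ k : ℕ) (v : Fin N → ℂ) : ℝ :=
  Real.sqrt (∑ i ∈ Finset.univ.filter (fun i : Fin N => i.val / W₀ = k),
    ‖v i‖ ^ 2)

end BandPaper

open BandPaper


section LogKolHelpers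

open MeasureTheory Set

variable (μ ν : Measure ℝ) [IsProbabilityMeasure μ] [IsProbabilityMeasure ν]

lemma aux_toReal_le_one (s : Set ℝ) : (μ s).toReal ≤ 1 := by
  have h : μ s ≤ 1 := prob_le_one
  calc (μ s).toReal ≤ (1 : ℝ≥0∞).toReal := ENNReal.toReal_mono ENNReal.one_ne_top h
    _ = 1 := by simp

lemma aux_kol_le {x : ℝ} (hx : 0 ≤ x) :
    |(μ (Icc 0 x)).toReal - (ν (Icc 0 x)).toReal| ≤ kolDist μ ν := by
  have hbdd : BddAbove (Set.range fun y : {y : ℝ // 0 ≤ y} =>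
      |(μ (Icc 0 (y : ℝ))).toReal - (ν (Icc 0 (y : ℝ))).toReal|) := by
    refine ⟨2, ?_⟩
    rintro r ⟨y, rfl⟩
    have h1 := aux_toReal_le_one μ (Icc 0 (y : ℝ))
    have h2 := aux_toReal_le_one ν (Icc 0 (y : ℝ))
    have h3 : (0 : ℝ) ≤ (μ (Icc 0 (y : ℝ))).toReal := ENNReal.toReal_nonneg
    have h4 : (0 : ℝ) ≤ (ν (Icc 0 (y : ℝ))).toReal := ENNReal.toReal_nonneg
    exact abs_le.mpr ⟨by linarith, by linarith⟩
  exact le_ciSup hbdd (⟨x, hx⟩ : {y : ℝ // 0 ≤ y})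

lemma aux_kol_nonneg : 0 ≤ kolDist μ ν :=
  le_trans (abs_nonneg _) (aux_kol_le μ ν le_rfl)

lemma aux_Ioc_toReal {c d : ℝ} (hc : 0 ≤ c) (hcd : c ≤ d) :
    (μ (Ioc c d)).toReal = (μ (Icc 0 d)).toReal - (μ (Icc 0 c)).toReal := by
  have hsub : Icc (0 : ℝ) c ⊆ Icc 0 d := Icc_subset_Icc le_rfl hcd
  have hs : Ioc c d = Icc 0 d \ Icc 0 c := by
    ext x
    simp only [mem_Ioc, mem_diff, mem_Icc, not_and, not_le]
    constructor
    · rintro ⟨h1, h2⟩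
      exact ⟨⟨hc.trans h1.le, h2⟩, fun _ => h1⟩
    · rintro ⟨⟨hx0, hxd⟩, hn⟩
      exact ⟨hn hx0, hxd⟩
  rw [hs, measure_diff hsub measurableSet_Icc.nullMeasurableSet (measure_ne_top μ _),
    ENNReal.toReal_sub_of_le (measure_mono hsub) (measure_ne_top μ _)]

lemma aux_Ioc_diff_le {c : ℝ} (d : ℝ) (hc : 0 ≤ c) :
    |(μ (Ioc c d)).toReal - (ν (Ioc c d)).toReal| ≤ 2 * kolDist μ ν := by
  rcases le_or_gt c d with hcd | hcd
  · rw [aux_Ioc_toReal μ hc hcd, aux_Ioc_toReal ν hc hcd]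
    have h1 := aux_kol_le μ ν (hc.trans hcd)
    have h2 := aux_kol_le μ ν hc
    have habs1 := abs_sub_abs_le_abs_sub ((μ (Icc 0 d)).toReal - (ν (Icc 0 d)).toReal)
      ((μ (Icc 0 c)).toReal - (ν (Icc 0 c)).toReal)
    calc |(μ (Icc 0 d)).toReal - (μ (Icc 0 c)).toReal
            - ((ν (Icc 0 d)).toReal - (ν (Icc 0 c)).toReal)|
        = |((μ (Icc 0 d)).toReal - (ν (Icc 0 d)).toReal)
            - ((μ (Icc 0 c)).toReal - (ν (Icc 0 c)).toReal)| := by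
              rw [show (μ (Icc 0 d)).toReal - (μ (Icc 0 c)).toReal
                - ((ν (Icc 0 d)).toReal - (ν (Icc 0 c)).toReal)
                = ((μ (Icc 0 d)).toReal - (ν (Icc 0 d)).toReal)
                - ((μ (Icc 0 c)).toReal - (ν (Icc 0 c)).toReal) from by ring]
      _ ≤ |(μ (Icc 0 d)).toReal - (ν (Icc 0 d)).toReal|
            + |(μ (Icc 0 c)).toReal - (ν (Icc 0 c)).toReal| := abs_sub _ _
      _ ≤ 2 * kolDist μ ν := by linarith
  · rw [Set.Ioc_eq_empty (not_lt.mpr hcd.le)]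
    simp only [measure_empty, ENNReal.toReal_zero, sub_zero, sub_self, abs_zero]
    have := aux_kol_nonneg μ ν
    linarith

lemma aux_log_integrableOn {c d : ℝ} (hc : 0 < c) :
    IntegrableOn Real.log (Ioc c d) μ := by
  refine (integrable_const (|Real.log c| + |Real.log d|)).mono'
    (Real.measurable_log.aestronglyMeasurable) ?_
  filter_upwards [ae_restrict_mem measurableSet_Ioc] with x hx
  have hx0 : 0 < x := hc.trans hx.1
  have h1 : Real.log c ≤ Real.log x := Real.log_le_log hc hx.1.le
  have h2 : Real.log x ≤ Real.log d := Real.log_le_log hx0 hx.2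
  rw [Real.norm_eq_abs]
  rcases abs_cases (Real.log x) with ⟨he, _⟩ | ⟨he, _⟩ <;> rw [he]
  · have := le_abs_self (Real.log d)
    have := abs_nonneg (Real.log c)
    linarith
  · have := neg_le_abs (Real.log c)
    have := abs_nonneg (Real.log d)
    linarith

lemma aux_rep_lower {c d : ℝ} (hc : 0 < c) (hcd : c ≤ d) :
    ∫ x in Ioc c d, Real.log x ∂μ
      = Real.log c * (μ (Ioc c d)).toReal
        + ∫ t in Ioc 0 (Real.log d - Real.log c),
            (μ (Ioc (c * Real.exp t) d)).toReal := by
  have hd : 0 < d := hc.trans_le hcd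
  set M := Real.log d - Real.log c with hM
  have hM0 : 0 ≤ M := by
    have := Real.log_le_log hc hcd
    simp only [hM]; linarith
  set f : ℝ → ℝ := fun x => Real.log x - Real.log c with hf
  have f_meas : Measurable f := Real.measurable_log.sub measurable_const
  have f_nn : 0 ≤ᵐ[μ.restrict (Ioc c d)] f := by
    filter_upwards [ae_restrict_mem measurableSet_Ioc] with x hx
    have := Real.log_le_log hc hx.1.le
    simp only [hf, Pi.zero_apply]; linarith
  have f_bd : ∀ᵐ x ∂(μ.restrict (Ioc c d)), ‖f x‖ ≤ M := by
    filter_upwards [ae_restrict_mem measurableSet_Ioc] with x hx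
    have hx0 : 0 < x := hc.trans hx.1
    have h1 := Real.log_le_log hc hx.1.le
    have h2 := Real.log_le_log hx0 hx.2
    rw [Real.norm_eq_abs, abs_le]
    constructor <;> simp only [hf] <;> [linarith; skip]
    simp only [hM]; linarith
  have f_int : Integrable f (μ.restrict (Ioc c d)) :=
    (integrable_const M).mono' f_meas.aestronglyMeasurable f_bd
  have key := f_int.integral_eq_integral_meas_lt f_nn
  have hset : ∀ t ∈ Ioi (0 : ℝ),
      ((μ.restrict (Ioc c d)) {a | t < f a}).toReal
        = (μ (Ioc (c * Real.exp t) d)).toReal := by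
    intro t ht
    rw [Measure.restrict_apply (measurableSet_lt measurable_const f_meas)]
    congr 2
    ext x
    simp only [mem_setOf_eq, mem_inter_iff, mem_Ioc, hf]
    constructor
    · rintro ⟨hlt, hcx, hxd⟩
      have hx0 : 0 < x := hc.trans hcx
      refine ⟨?_, hxd⟩
      have hlog : Real.log c + t < Real.log x := by linarith
      calc c * Real.exp t = Real.exp (Real.log c + t) := by
            rw [Real.exp_add, Real.exp_log hc]
        _ < x := (Real.lt_log_iff_exp_lt hx0).mp hlog
    · rintro ⟨hlt, hxd⟩
      have hce : (0 : ℝ) < c * Real.exp t := mul_pos hc (Real.exp_pos t)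
      have hx0 : 0 < x := hce.trans hlt
      have hcx : c < x := by
        have h1 : c ≤ c * Real.exp t :=
          le_mul_of_one_le_right hc.le (Real.one_le_exp ht.out.le)
        linarith
      have hexp : Real.exp (Real.log c + t) < x := by
        rw [Real.exp_add, Real.exp_log hc]; exact hlt
      have := (Real.lt_log_iff_exp_lt hx0).mpr hexp
      exact ⟨by linarith, hcx, hxd⟩
  have key2 : ∫ t in Ioi (0 : ℝ), ((μ.restrict (Ioc c d)) {a | t < f a}).toReal
      = ∫ t in Ioi (0 : ℝ), (μ (Ioc (c * Real.exp t) d)).toReal :=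
    setIntegral_congr_fun measurableSet_Ioi (fun t ht => hset t ht)
  have key3 : ∫ t in Ioc (0 : ℝ) M, (μ (Ioc (c * Real.exp t) d)).toReal
      = ∫ t in Ioi (0 : ℝ), (μ (Ioc (c * Real.exp t) d)).toReal := by
    refine (setIntegral_eq_of_subset_of_ae_diff_eq_zero
      nullMeasurableSet_Ioi Ioc_subset_Ioi_self ?_).symm
    refine Filter.Eventually.of_forall fun t ht => ?_
    have htM : M < t := by
      rcases ht with ⟨ht1, ht2⟩
      simp only [mem_Ioc, not_and, not_le] at ht2
      exact ht2 ht1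
    have hdd : d ≤ c * Real.exp t := by
      have : d = c * Real.exp M := by
        rw [hM, Real.exp_sub, Real.exp_log hd, Real.exp_log hc]
        field_simp
      rw [this]
      exact mul_le_mul_of_nonneg_left (Real.exp_le_exp.mpr htM.le) hc.le
    rw [Set.Ioc_eq_empty (not_lt.mpr hdd)]
    simp
  have hlogeq : ∀ x ∈ Ioc c d, Real.log x = f x + Real.log c := by
    intro x _; simp [hf]
  calc ∫ x in Ioc c d, Real.log x ∂μ
      = ∫ x in Ioc c d, (f x + Real.log c) ∂μ :=
        setIntegral_congr_fun measurableSet_Ioc hlogeq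
    _ = (∫ x in Ioc c d, f x ∂μ) + ∫ _x in Ioc c d, Real.log c ∂μ :=
        integral_add f_int (integrable_const _)
    _ = (∫ t in Ioi (0 : ℝ), (μ (Ioc (c * Real.exp t) d)).toReal)
          + Real.log c * (μ (Ioc c d)).toReal := by
        rw [key, integral_const]; simp only [measureReal_def]
        rw [key2, Measure.restrict_apply_univ, smul_eq_mul, mul_comm]
    _ = Real.log c * (μ (Ioc c d)).toReal
          + ∫ t in Ioc 0 M, (μ (Ioc (c * Real.exp t) d)).toReal := by
        rw [key3]; ring

lemma aux_rep_upper {c d : ℝ} (hc : 0 < c) (hcd : c ≤ d) :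
    ∫ x in Ioc c d, Real.log x ∂μ
      = Real.log d * (μ (Ioc c d)).toReal
        - ∫ t in Ioc 0 (Real.log d - Real.log c),
            (μ (Ioc c (d * Real.exp (-t)))).toReal := by
  have hd : 0 < d := hc.trans_le hcd
  set M := Real.log d - Real.log c with hM
  have hM0 : 0 ≤ M := by
    have := Real.log_le_log hc hcd
    simp only [hM]; linarith
  set f : ℝ → ℝ := fun x => Real.log d - Real.log x with hf
  have f_meas : Measurable f := measurable_const.sub Real.measurable_log
  have f_nn : 0 ≤ᵐ[μ.restrict (Ioc c d)] f := by
    filter_upwards [ae_restrict_mem measurableSet_Ioc] with x hx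
    have hx0 : 0 < x := hc.trans hx.1
    have := Real.log_le_log hx0 hx.2
    simp only [hf, Pi.zero_apply]; linarith
  have f_bd : f ≤ᵐ[μ.restrict (Ioc c d)] fun _ => M := by
    filter_upwards [ae_restrict_mem measurableSet_Ioc] with x hx
    have := Real.log_le_log hc hx.1.le
    simp only [hf, hM]; linarith
  have f_int : Integrable f (μ.restrict (Ioc c d)) := by
    refine (integrable_const M).mono' f_meas.aestronglyMeasurable ?_
    filter_upwards [f_nn, f_bd] with x h1 h2
    rw [Real.norm_eq_abs, abs_of_nonneg h1]
    exact h2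
  have key := f_int.integral_eq_integral_Ioc_meas_le f_nn f_bd
  have hset : ∀ t ∈ Ioc (0 : ℝ) M,
      ((μ.restrict (Ioc c d)) {a | t ≤ f a}).toReal
        = (μ (Ioc c (d * Real.exp (-t)))).toReal := by
    intro t ht
    rw [Measure.restrict_apply (measurableSet_le measurable_const f_meas)]
    congr 2
    ext x
    simp only [mem_setOf_eq, mem_inter_iff, mem_Ioc, hf]
    have hde : (0 : ℝ) < d * Real.exp (-t) := mul_pos hd (Real.exp_pos _)
    constructor
    · rintro ⟨hle, hcx, hxd⟩
      have hx0 : 0 < x := hc.trans hcx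
      refine ⟨hcx, ?_⟩
      have hlog : Real.log x ≤ Real.log d - t := by linarith
      have : Real.log x ≤ Real.log (d * Real.exp (-t)) := by
        rw [Real.log_mul hd.ne' (Real.exp_pos _).ne', Real.log_exp]; linarith
      exact (Real.log_le_log_iff hx0 hde).mp this
    · rintro ⟨hcx, hxd⟩
      have hx0 : 0 < x := hc.trans hcx
      have hxd' : x ≤ d := by
        have h1 : Real.exp (-t) ≤ 1 := Real.exp_le_one_iff.mpr (by linarith [ht.1])
        calc x ≤ d * Real.exp (-t) := hxd
          _ ≤ d * 1 := mul_le_mul_of_nonneg_left h1 hd.le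
          _ = d := mul_one d
      have hlog : Real.log x ≤ Real.log (d * Real.exp (-t)) :=
        Real.log_le_log hx0 hxd
      rw [Real.log_mul hd.ne' (Real.exp_pos _).ne', Real.log_exp] at hlog
      exact ⟨by linarith, hcx, hxd'⟩
  have key2 : ∫ t in Ioc (0 : ℝ) M, ((μ.restrict (Ioc c d)) {a | t ≤ f a}).toReal
      = ∫ t in Ioc (0 : ℝ) M, (μ (Ioc c (d * Real.exp (-t)))).toReal :=
    setIntegral_congr_fun measurableSet_Ioc (fun t ht => hset t ht)
  have hlogeq : ∀ x ∈ Ioc c d, Real.log x = Real.log d - f x := by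
    intro x _; simp [hf]
  calc ∫ x in Ioc c d, Real.log x ∂μ
      = ∫ x in Ioc c d, (Real.log d - f x) ∂μ :=
        setIntegral_congr_fun measurableSet_Ioc hlogeq
    _ = (∫ _x in Ioc c d, Real.log d ∂μ) - ∫ x in Ioc c d, f x ∂μ :=
        integral_sub (integrable_const _) f_int
    _ = Real.log d * (μ (Ioc c d)).toReal
          - ∫ t in Ioc 0 M, (μ (Ioc c (d * Real.exp (-t)))).toReal := by
        rw [key, integral_const]; simp only [measureReal_def]
        rw [key2, Measure.restrict_apply_univ, smul_eq_mul, mul_comm]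

lemma aux_int_diff {M : ℝ} (hM : 0 ≤ M) {p q : ℝ → ℝ} (hp : Monotone p) (hq : Antitone q)
    (hp0 : ∀ t, 0 ≤ p t) :
    |(∫ t in Ioc (0 : ℝ) M, (μ (Ioc (p t) (q t))).toReal)
        - ∫ t in Ioc (0 : ℝ) M, (ν (Ioc (p t) (q t))).toReal|
      ≤ 2 * kolDist μ ν * M := by
  haveI hfin : IsFiniteMeasure (volume.restrict (Ioc (0 : ℝ) M)) :=
    ⟨by rw [Measure.restrict_apply_univ, Real.volume_Ioc]; exact ENNReal.ofReal_lt_top⟩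
  have hanti : ∀ (ρ : Measure ℝ) [IsProbabilityMeasure ρ],
      Antitone fun t => (ρ (Ioc (p t) (q t))).toReal := by
    intro ρ _ s t hst
    exact ENNReal.toReal_mono (measure_ne_top ρ _)
      (measure_mono (Ioc_subset_Ioc (hp hst) (hq hst)))
  have hint : ∀ (ρ : Measure ℝ) [IsProbabilityMeasure ρ],
      Integrable (fun t => (ρ (Ioc (p t) (q t))).toReal)
        (volume.restrict (Ioc (0 : ℝ) M)) := by
    intro ρ _
    refine (integrable_const (1 : ℝ)).mono'
      ((hanti ρ).measurable.aestronglyMeasurable) ?_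
    refine Filter.Eventually.of_forall fun t => ?_
    rw [Real.norm_eq_abs, abs_of_nonneg ENNReal.toReal_nonneg]
    exact aux_toReal_le_one ρ _
  rw [← integral_sub (hint μ) (hint ν)]
  have step1 : |∫ t in Ioc (0 : ℝ) M,
        ((μ (Ioc (p t) (q t))).toReal - (ν (Ioc (p t) (q t))).toReal)|
      ≤ ∫ t in Ioc (0 : ℝ) M,
        |(μ (Ioc (p t) (q t))).toReal - (ν (Ioc (p t) (q t))).toReal| := by
    simpa [Real.norm_eq_abs] using
      norm_integral_le_integral_norm (μ := volume.restrict (Ioc (0 : ℝ) M))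
        (f := fun t => (μ (Ioc (p t) (q t))).toReal - (ν (Ioc (p t) (q t))).toReal)
  refine step1.trans ?_
  have step2 : ∫ t in Ioc (0 : ℝ) M,
        |(μ (Ioc (p t) (q t))).toReal - (ν (Ioc (p t) (q t))).toReal|
      ≤ ∫ _t in Ioc (0 : ℝ) M, (2 * kolDist μ ν) := by
    refine integral_mono ((hint μ).sub (hint ν)).abs (integrable_const _) ?_
    intro t
    exact aux_Ioc_diff_le μ ν (q t) (hp0 t)
  refine step2.trans ?_
  rw [integral_const]; simp only [measureReal_def]
  rw [Measure.restrict_apply_univ, Real.volume_Ioc, smul_eq_mul,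
    ENNReal.toReal_ofReal (by linarith)]
  rw [sub_zero]
  nlinarith [aux_kol_nonneg μ ν]

lemma aux_bound_lower {c d : ℝ} (hc : 0 < c) (hcd : c ≤ d) :
    |(∫ x in Ioc c d, Real.log x ∂μ) - ∫ x in Ioc c d, Real.log x ∂ν|
      ≤ 2 * kolDist μ ν * (|Real.log c| + (Real.log d - Real.log c)) := by
  have hM0 : 0 ≤ Real.log d - Real.log c := by
    have := Real.log_le_log hc hcd; linarith
  rw [aux_rep_lower μ hc hcd, aux_rep_lower ν hc hcd]
  have h1 := aux_Ioc_diff_le μ ν d hc.le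
  have h2 := aux_int_diff μ ν hM0 (p := fun t => c * Real.exp t) (q := fun _ => d)
    (fun s t hst => mul_le_mul_of_nonneg_left (Real.exp_le_exp.mpr hst) hc.le)
    antitone_const (fun t => (mul_pos hc (Real.exp_pos t)).le)
  set P := (μ (Ioc c d)).toReal
  set Q := (ν (Ioc c d)).toReal
  set Iμ := ∫ t in Ioc 0 (Real.log d - Real.log c), (μ (Ioc (c * Real.exp t) d)).toReal
  set Iν := ∫ t in Ioc 0 (Real.log d - Real.log c), (ν (Ioc (c * Real.exp t) d)).toReal
  have habs : |Real.log c * P + Iμ - (Real.log c * Q + Iν)|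
      ≤ |Real.log c| * |P - Q| + |Iμ - Iν| := by
    rw [show Real.log c * P + Iμ - (Real.log c * Q + Iν)
        = Real.log c * (P - Q) + (Iμ - Iν) from by ring]
    refine (abs_add_le _ _).trans ?_
    rw [abs_mul]
  refine habs.trans ?_
  have h3 : |Real.log c| * |P - Q| ≤ |Real.log c| * (2 * kolDist μ ν) :=
    mul_le_mul_of_nonneg_left h1 (abs_nonneg _)
  nlinarith [abs_nonneg (Real.log c)]

lemma aux_bound_upper {c d : ℝ} (hc : 0 < c) (hcd : c ≤ d) :
    |(∫ x in Ioc c d, Real.log x ∂μ) - ∫ x in Ioc c d, Real.log x ∂ν|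
      ≤ 2 * kolDist μ ν * (|Real.log d| + (Real.log d - Real.log c)) := by
  have hd : 0 < d := hc.trans_le hcd
  have hM0 : 0 ≤ Real.log d - Real.log c := by
    have := Real.log_le_log hc hcd; linarith
  rw [aux_rep_upper μ hc hcd, aux_rep_upper ν hc hcd]
  have h1 := aux_Ioc_diff_le μ ν d hc.le
  have h2 := aux_int_diff μ ν hM0 (p := fun _ => c) (q := fun t => d * Real.exp (-t))
    monotone_const
    (fun s t hst => mul_le_mul_of_nonneg_left (Real.exp_le_exp.mpr (by linarith)) hd.le)
    (fun _ => hc.le)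
  set P := (μ (Ioc c d)).toReal
  set Q := (ν (Ioc c d)).toReal
  set Iμ := ∫ t in Ioc 0 (Real.log d - Real.log c), (μ (Ioc c (d * Real.exp (-t)))).toReal
  set Iν := ∫ t in Ioc 0 (Real.log d - Real.log c), (ν (Ioc c (d * Real.exp (-t)))).toReal
  have habs : |Real.log d * P - Iμ - (Real.log d * Q - Iν)|
      ≤ |Real.log d| * |P - Q| + |Iμ - Iν| := by
    rw [show Real.log d * P - Iμ - (Real.log d * Q - Iν)
        = Real.log d * (P - Q) + (Iν - Iμ) from by ring]
    refine (abs_add_le _ _).trans ?_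
    rw [abs_mul, abs_sub_comm Iν Iμ]
  refine habs.trans ?_
  have h3 : |Real.log d| * |P - Q| ≤ |Real.log d| * (2 * kolDist μ ν) :=
    mul_le_mul_of_nonneg_left h1 (abs_nonneg _)
  nlinarith [abs_nonneg (Real.log d)]

end LogKolHelpers

/-- comparison of logarithmic integrals via the Kolmogorov distance
(Lemma 2.8, from Jain–Jana–Luh–O'Rourke). -/
theorem log_integral_kolmogorov_bound
    (μ ν : Measure ℝ) [IsProbabilityMeasure μ] [IsProbabilityMeasure ν]
    (a b : ℝ) (ha : 0 < a) (hab : a < b) :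
    |(∫ x in Set.Ioc a b, Real.log x ∂μ) - ∫ x in Set.Ioc a b, Real.log x ∂ν| ≤
      2 * (|Real.log a| + |Real.log b|) * kolDist μ ν := by
  have hb : 0 < b := ha.trans hab
  have hK := aux_kol_nonneg μ ν
  by_cases hb1 : b ≤ 1
  · -- b ≤ 1 : use upper representation
    have h := aux_bound_upper μ ν ha hab.le
    have hlb : Real.log b ≤ 0 := Real.log_nonpos hb.le hb1
    have hla : -Real.log a ≤ |Real.log a| := neg_le_abs _
    have hlb2 : -Real.log b ≤ |Real.log b| := neg_le_abs _
    refine h.trans ?_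
    nlinarith [mul_nonneg hK (show (0:ℝ) ≤ |Real.log a| + Real.log a - Real.log b + |Real.log b| by
      nlinarith), hK]
  · by_cases ha1 : 1 ≤ a
    · -- 1 ≤ a : use lower representation
      have h := aux_bound_lower μ ν ha hab.le
      have hla : 0 ≤ Real.log a := Real.log_nonneg ha1
      have haa : Real.log a ≤ |Real.log a| := le_abs_self _
      have hlb : Real.log b ≤ |Real.log b| := le_abs_self _
      refine h.trans ?_
      nlinarith [mul_nonneg hK (show (0:ℝ) ≤ |Real.log b| - Real.log b + Real.log a by linarith)]
    · -- a < 1 < b : split at 1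
      push_neg at hb1 ha1
      have hsplit : ∀ (ρ : Measure ℝ) [IsProbabilityMeasure ρ],
          ∫ x in Set.Ioc a b, Real.log x ∂ρ
            = (∫ x in Set.Ioc a 1, Real.log x ∂ρ) + ∫ x in Set.Ioc 1 b, Real.log x ∂ρ := by
        intro ρ _
        rw [← Set.Ioc_union_Ioc_eq_Ioc ha1.le hb1.le]
        exact MeasureTheory.setIntegral_union (Set.Ioc_disjoint_Ioc_of_le le_rfl) measurableSet_Ioc
          (aux_log_integrableOn ρ ha) (aux_log_integrableOn ρ one_pos)
      rw [hsplit μ, hsplit ν]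
      have h1 := aux_bound_upper μ ν ha ha1.le
      have h2 := aux_bound_lower μ ν one_pos hb1.le
      rw [Real.log_one] at h1 h2
      have hla : Real.log a < 0 := Real.log_neg ha ha1
      have hlb : 0 < Real.log b := Real.log_pos hb1
      have habs : |(∫ x in Set.Ioc a 1, Real.log x ∂μ) + (∫ x in Set.Ioc 1 b, Real.log x ∂μ)
            - ((∫ x in Set.Ioc a 1, Real.log x ∂ν) + ∫ x in Set.Ioc 1 b, Real.log x ∂ν)|
          ≤ |(∫ x in Set.Ioc a 1, Real.log x ∂μ) - ∫ x in Set.Ioc a 1, Real.log x ∂ν|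
            + |(∫ x in Set.Ioc 1 b, Real.log x ∂μ) - ∫ x in Set.Ioc 1 b, Real.log x ∂ν| := by
        rw [show (∫ x in Set.Ioc a 1, Real.log x ∂μ) + (∫ x in Set.Ioc 1 b, Real.log x ∂μ)
            - ((∫ x in Set.Ioc a 1, Real.log x ∂ν) + ∫ x in Set.Ioc 1 b, Real.log x ∂ν)
            = ((∫ x in Set.Ioc a 1, Real.log x ∂μ) - ∫ x in Set.Ioc a 1, Real.log x ∂ν)
              + ((∫ x in Set.Ioc 1 b, Real.log x ∂μ) - ∫ x in Set.Ioc 1 b, Real.log x ∂ν)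
            from by ring]
        exact abs_add_le _ _
      refine habs.trans ?_
      have e1 : |Real.log a| = -Real.log a := abs_of_neg hla
      have e2 : |Real.log b| = Real.log b := abs_of_pos hlb
      rw [e1, e2] at *
      simp only [abs_zero] at h1 h2
      nlinarith [h1, h2, hK]
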